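/- Let m > n ≥ 1 and A(f) = ⟨f, zⁿ⟩z^m on the Bergman space A²(𝔻). Then Ber(A) = {(1-r²)² r^{m+n} e^{iθ(m-n)} : 0 ≤ r < 1, θ ∈ ℝ} is a closed disc centered at the origin of radius (4/(m+n+4))² · ((m+n)/(m+n+4))^{(m+n)/2}; in particular it is convex. The radius is sup_{0≤r<1} (1-r²)² r^{m+n}, attained at r = √((m+n)/(m+n+4)). -/

import Mathlib

open Complex

lemma amgm_aux (k : ℕ) (hk : 1 ≤ k) {t : ℝ} (ht0 : 0 ≤ t) (ht1 : t ≤ 1) :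
    (1 - t) ^ 4 * t ^ k ≤ (4 / ((k : ℝ) + 4)) ^ 4 * ((k : ℝ) / ((k : ℝ) + 4)) ^ k := by
  have hK : (0 : ℝ) < k := by exact_mod_cast hk
  have hK4 : (0 : ℝ) < (k : ℝ) + 4 := by linarith
  set A : ℝ := 4 / ((k : ℝ) + 4) with hAdef
  set B : ℝ := (k : ℝ) / ((k : ℝ) + 4) with hBdef
  have hA : 0 < A := by positivity
  have hB : 0 < B := by positivity
  have hAB : A + B = 1 := by
    rw [hAdef, hBdef, ← add_div, div_eq_one_iff_eq hK4.ne']; ring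
  set p₁ : ℝ := (1 - t) / A with hp₁def
  set p₂ : ℝ := t / B with hp₂def
  have hp₁ : 0 ≤ p₁ := div_nonneg (by linarith) hA.le
  have hp₂ : 0 ≤ p₂ := div_nonneg ht0 hB.le
  have hAp₁ : A * p₁ = 1 - t := by
    rw [hp₁def, mul_div_cancel₀ _ hA.ne']
  have hBp₂ : B * p₂ = t := by
    rw [hp₂def, mul_div_cancel₀ _ hB.ne']
  have h1 : p₁ ^ A * p₂ ^ B ≤ 1 := by
    have := Real.geom_mean_le_arith_mean2_weighted hA.le hB.le hp₁ hp₂ hAB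
    calc p₁ ^ A * p₂ ^ B ≤ A * p₁ + B * p₂ := this
      _ = 1 := by rw [hAp₁, hBp₂]; ring
  have h2 : (p₁ ^ A * p₂ ^ B) ^ ((k : ℝ) + 4) ≤ 1 :=
    Real.rpow_le_one (by positivity) h1 (by positivity)
  have h3 : p₁ ^ (4 : ℕ) * p₂ ^ k ≤ 1 := by
    have e1 : A * ((k : ℝ) + 4) = (4 : ℝ) := by
      rw [hAdef]; exact div_mul_cancel₀ 4 hK4.ne'
    have e2 : B * ((k : ℝ) + 4) = (k : ℝ) := by
      rw [hBdef]; exact div_mul_cancel₀ _ hK4.ne'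
    rw [Real.mul_rpow (by positivity) (by positivity), ← Real.rpow_mul hp₁,
      ← Real.rpow_mul hp₂, e1, e2] at h2
    exact_mod_cast h2
  calc (1 - t) ^ 4 * t ^ k = (A * p₁) ^ 4 * (B * p₂) ^ k := by rw [hAp₁, hBp₂]
    _ = (A ^ 4 * B ^ k) * (p₁ ^ 4 * p₂ ^ k) := by ring
    _ ≤ (A ^ 4 * B ^ k) * 1 := by
        apply mul_le_mul_of_nonneg_left h3 (by positivity)
    _ = A ^ 4 * B ^ k := by ring

lemma val_aux (k : ℕ) (hk : 1 ≤ k) :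
    (1 - (Real.sqrt ((k : ℝ) / ((k : ℝ) + 4))) ^ 2) ^ 2 *
        (Real.sqrt ((k : ℝ) / ((k : ℝ) + 4))) ^ k
      = (4 / ((k : ℝ) + 4)) ^ 2 * ((k : ℝ) / ((k : ℝ) + 4)) ^ ((k : ℝ) / 2) := by
  have hK : (0 : ℝ) < k := by exact_mod_cast hk
  have hK4 : (0 : ℝ) < (k : ℝ) + 4 := by linarith
  set B : ℝ := (k : ℝ) / ((k : ℝ) + 4) with hBdef
  have hB : 0 ≤ B := by positivity
  have h1 : (Real.sqrt B) ^ 2 = B := Real.sq_sqrt hB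
  have h2 : (1 : ℝ) - B = 4 / ((k : ℝ) + 4) := by
    rw [hBdef, sub_eq_iff_eq_add, ← add_div, eq_div_iff hK4.ne']; ring
  have h3 : (Real.sqrt B) ^ k = B ^ ((k : ℝ) / 2) := by
    rw [Real.sqrt_eq_rpow, ← Real.rpow_natCast (B ^ ((1 : ℝ)/2)) k, ← Real.rpow_mul hB]
    congr 1
    ring
  rw [h1, h2, h3]

lemma bound_aux (k : ℕ) (hk : 1 ≤ k) {r : ℝ} (hr0 : 0 ≤ r) (hr1 : r ≤ 1) :
    (1 - r ^ 2) ^ 2 * r ^ k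
      ≤ (4 / ((k : ℝ) + 4)) ^ 2 * ((k : ℝ) / ((k : ℝ) + 4)) ^ ((k : ℝ) / 2) := by
  have hK : (0 : ℝ) < k := by exact_mod_cast hk
  have hK4 : (0 : ℝ) < (k : ℝ) + 4 := by linarith
  have ht1 : r ^ 2 ≤ 1 := by nlinarith
  have hL0 : 0 ≤ (1 - r ^ 2) ^ 2 * r ^ k := by positivity
  have hR0 : 0 ≤ (4 / ((k : ℝ) + 4)) ^ 2 * ((k : ℝ) / ((k : ℝ) + 4)) ^ ((k : ℝ) / 2) := by
    positivity
  have hsq : ((1 - r ^ 2) ^ 2 * r ^ k) ^ 2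
      ≤ ((4 / ((k : ℝ) + 4)) ^ 2 * ((k : ℝ) / ((k : ℝ) + 4)) ^ ((k : ℝ) / 2)) ^ 2 := by
    have hB : (0 : ℝ) ≤ (k : ℝ) / ((k : ℝ) + 4) := by positivity
    have hre : (((k : ℝ) / ((k : ℝ) + 4)) ^ ((k : ℝ) / 2)) ^ (2 : ℕ)
        = ((k : ℝ) / ((k : ℝ) + 4)) ^ k := by
      rw [← Real.rpow_natCast (((k : ℝ) / ((k : ℝ) + 4)) ^ ((k : ℝ) / 2)) 2,
        ← Real.rpow_mul hB, ← Real.rpow_natCast ((k : ℝ) / ((k : ℝ) + 4)) k]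
      congr 1
      push_cast
      ring
    have hle : (1 - r ^ 2) ^ 4 * (r ^ 2) ^ k
        ≤ (4 / ((k : ℝ) + 4)) ^ 4 * ((k : ℝ) / ((k : ℝ) + 4)) ^ k :=
      amgm_aux k hk (by positivity) ht1
    calc ((1 - r ^ 2) ^ 2 * r ^ k) ^ 2 = (1 - r ^ 2) ^ 4 * (r ^ 2) ^ k := by
          rw [mul_pow, ← pow_mul, ← pow_mul, ← pow_mul']
      _ ≤ (4 / ((k : ℝ) + 4)) ^ 4 * ((k : ℝ) / ((k : ℝ) + 4)) ^ k := hle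
      _ = ((4 / ((k : ℝ) + 4)) ^ 2 * ((k : ℝ) / ((k : ℝ) + 4)) ^ ((k : ℝ) / 2)) ^ 2 := by
          rw [mul_pow, hre, ← pow_mul]
  nlinarith [hsq]

theorem berezin_range_rank_one_zn_zm_bergman (m n : ℕ) (hn : 1 ≤ n) (hmn : n < m) :
    ({z : ℂ | ∃ r θ : ℝ, 0 ≤ r ∧ r < 1 ∧
        z = (((1 - r ^ 2) ^ 2 * r ^ (m + n) : ℝ) : ℂ) *
          Complex.exp ((θ * ((m : ℝ) - n) : ℝ) * Complex.I)} =
      Metric.closedBall (0 : ℂ)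
        ((4 / ((m : ℝ) + n + 4)) ^ 2 *
          (((m : ℝ) + n) / ((m : ℝ) + n + 4)) ^ (((m : ℝ) + n) / 2))) ∧
    ((1 - (Real.sqrt (((m : ℝ) + n) / ((m : ℝ) + n + 4))) ^ 2) ^ 2 *
        (Real.sqrt (((m : ℝ) + n) / ((m : ℝ) + n + 4))) ^ (m + n)
      = (4 / ((m : ℝ) + n + 4)) ^ 2 *
          (((m : ℝ) + n) / ((m : ℝ) + n + 4)) ^ (((m : ℝ) + n) / 2)) ∧
    Convex ℝ {z : ℂ | ∃ r θ : ℝ, 0 ≤ r ∧ r < 1 ∧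
        z = (((1 - r ^ 2) ^ 2 * r ^ (m + n) : ℝ) : ℂ) *
          Complex.exp ((θ * ((m : ℝ) - n) : ℝ) * Complex.I)} := by
  have hk : 1 ≤ m + n := by omega
  have hc : ((m : ℝ) + (n : ℝ)) = ((m + n : ℕ) : ℝ) := by push_cast; ring
  have hmn' : ((m : ℝ) - (n : ℝ)) ≠ 0 := by
    have h : (n : ℝ) < (m : ℝ) := by exact_mod_cast hmn
    exact sub_ne_zero.mpr (ne_of_gt h)
  rw [hc]
  set k := m + n with hkdef
  set R : ℝ := (4 / ((k : ℝ) + 4)) ^ 2 * ((k : ℝ) / ((k : ℝ) + 4)) ^ ((k : ℝ) / 2) with hR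
  have hK : (0 : ℝ) < k := by exact_mod_cast hk
  have hK4 : (0 : ℝ) < (k : ℝ) + 4 := by linarith
  have hset : {z : ℂ | ∃ r θ : ℝ, 0 ≤ r ∧ r < 1 ∧
        z = (((1 - r ^ 2) ^ 2 * r ^ k : ℝ) : ℂ) *
          Complex.exp ((θ * ((m : ℝ) - n) : ℝ) * Complex.I)} =
      Metric.closedBall (0 : ℂ) R := by
    ext z
    simp only [Set.mem_setOf_eq, Metric.mem_closedBall, dist_zero_right]
    constructor
    · rintro ⟨r, θ, hr0, hr1, rfl⟩
      have h1 : (0:ℝ) ≤ (1 - r ^ 2) ^ 2 * r ^ k := by positivity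
      have : ‖(((1 - r ^ 2) ^ 2 * r ^ k : ℝ) : ℂ) *
          Complex.exp ((θ * ((m : ℝ) - n) : ℝ) * Complex.I)‖
          = (1 - r ^ 2) ^ 2 * r ^ k := by
        rw [norm_mul,
          Complex.norm_exp_ofReal_mul_I, Complex.norm_real, Real.norm_of_nonneg h1, mul_one]
      rw [this]
      exact bound_aux k hk hr0 hr1.le
    · intro hz
      have habs : ‖z‖ ≤ R := hz
      set s := Real.sqrt ((k : ℝ) / ((k : ℝ) + 4)) with hs
      have hB0 : (0:ℝ) ≤ (k : ℝ) / ((k : ℝ) + 4) := by positivity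
      have hB1 : (k : ℝ) / ((k : ℝ) + 4) < 1 := by
        rw [div_lt_one hK4]; linarith
      have hs1 : s < 1 := by
        nlinarith [Real.sq_sqrt hB0, Real.sqrt_nonneg ((k : ℝ) / ((k : ℝ) + 4))]
      have hcont : Continuous (fun r : ℝ => (1 - r ^ 2) ^ 2 * r ^ k) := by continuity
      have hIVT := intermediate_value_Icc (Real.sqrt_nonneg ((k : ℝ) / ((k : ℝ) + 4)))
        hcont.continuousOn
      have hf0 : (1 - (0:ℝ) ^ 2) ^ 2 * (0:ℝ) ^ k = 0 := by
        rw [zero_pow (by omega : k ≠ 0), mul_zero]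
      have hfs : (1 - s ^ 2) ^ 2 * s ^ k = R := val_aux k hk
      have hmem : ‖z‖ ∈
          Set.Icc ((fun r : ℝ => (1 - r ^ 2) ^ 2 * r ^ k) 0)
            ((fun r : ℝ => (1 - r ^ 2) ^ 2 * r ^ k) s) := by
        simp only
        rw [hf0, hfs]
        exact ⟨norm_nonneg z, habs⟩
      obtain ⟨r, ⟨hr0, hrs⟩, hfr⟩ := hIVT hmem
      simp only at hfr
      refine ⟨r, z.arg / ((m : ℝ) - n), hr0, lt_of_le_of_lt hrs hs1, ?_⟩
      have harg : z.arg / ((m : ℝ) - n) * ((m : ℝ) - n) = z.arg :=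
        div_mul_cancel₀ _ hmn'
      rw [harg, hfr]
      exact (Complex.norm_mul_exp_arg_mul_I z).symm
  exact ⟨hset, val_aux k hk, by rw [hset]; exact convex_closedBall 0 R⟩
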